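/- For bounded self-adjoint operators T, V on a Hilbert space and t ∈ ℝ, the first-order Trotter error satisfies ‖e^{−it(T+V)} − e^{−itT} e^{−itV}‖ ≤ (t²/2) ‖[T, V]‖. -/

import Mathlib

set_option maxHeartbeats 1000000

open NormedSpace Complex

section TrotterAux

variable {H : Type*} [NormedAddCommGroup H] [InnerProductSpace ℂ H] [CompleteSpace H]

/-- Vector-valued version of `HasDerivAt.comp_ofReal`. -/
private lemma trotter_comp_ofReal {E : Type*} [NormedAddCommGroup E] [NormedSpace ℂ E]
    {e : ℂ → E} {e' : E} {z : ℝ} (hf : HasDerivAt e e' z) :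
    HasDerivAt (fun y : ℝ => e y) e' z := by
  simpa [Function.comp_def] using HasDerivAt.scomp z hf Complex.ofRealCLM.hasDerivAt

/-- `e^{-isX}` is unitary, hence has norm one, for selfadjoint `X`. -/
private lemma trotter_norm_exp_one [Nontrivial H] {X : H →L[ℂ] H} (hX : IsSelfAdjoint X)
    (s : ℝ) : ‖exp ((s : ℂ) • ((-I) • X))‖ = 1 := by
  obtain ⟨x, hx⟩ := exists_ne (0 : H)
  haveI : Nontrivial (H →L[ℂ] H) :=
    ⟨1, 0, fun h => hx (by simpa using DFunLike.congr_fun h x)⟩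
  have hXs : IsSelfAdjoint ((((-s : ℝ) : ℂ)) • X) := by
    rw [IsSelfAdjoint, star_smul, Complex.star_def, Complex.conj_ofReal, hX.star_eq]
  have h1 : (s : ℂ) • ((-I) • X) = I • ((((-s : ℝ) : ℂ)) • X) := by
    rw [smul_smul, smul_smul]; congr 1; push_cast; ring
  have h2 : exp ((s : ℂ) • ((-I) • X))
      = (selfAdjoint.expUnitary (⟨_, hXs⟩ : selfAdjoint (H →L[ℂ] H)) : H →L[ℂ] H) := by
    rw [h1, selfAdjoint.expUnitary_coe]
  rw [h2]
  exact CStarRing.norm_coe_unitary _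

private lemma trotter_commute (B : H →L[ℂ] H) (z : ℂ) :
    B * exp (z • B) = exp (z • B) * B :=
  (((Commute.refl B).smul_right z).exp_right).eq

private lemma trotter_inv (B : H →L[ℂ] H) (z : ℂ) :
    exp ((-z) • B) * exp (z • B) = 1 := by
  let +nondep : NormedAlgebra ℚ (H →L[ℂ] H) := .restrictScalars ℚ ℂ _
  rw [← exp_add_of_commute (((Commute.refl B).smul_left (-z)).smul_right z),
    ← add_smul, neg_add_cancel, zero_smul, NormedSpace.exp_zero]

private lemma trotter_conj_deriv (B Y : H →L[ℂ] H) (s : ℝ) :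
    HasDerivAt (fun r : ℝ => exp ((r : ℂ) • B) * (Y * exp ((-(r : ℂ)) • B)))
      (exp ((s : ℂ) • B) * ((B * Y - Y * B) * exp ((-(s : ℂ)) • B))) s := by
  have h1 : HasDerivAt (fun z : ℂ => exp ((-z) • B))
      (-(exp ((-(s : ℂ)) • B) * B)) (s : ℂ) := by
    have h := HasDerivAt.scomp (s : ℂ)
      (hasDerivAt_exp_smul_const (𝕂 := ℂ) B (-(s : ℂ))) (hasDerivAt_neg (s : ℂ))
    rw [neg_one_smul] at h
    exact h
  have h2 := (hasDerivAt_exp_smul_const (𝕂 := ℂ) B (s : ℂ)).mul (h1.const_mul Y)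
  have h3 : HasDerivAt (fun z : ℂ => exp (z • B) * (Y * exp ((-z) • B)))
      (exp ((s : ℂ) • B) * ((B * Y - Y * B) * exp ((-(s : ℂ)) • B))) (s : ℂ) := by
    refine h2.congr_deriv ?_
    rw [← trotter_commute B (-(s : ℂ))]
    noncomm_ring
  exact trotter_comp_ofReal h3

private lemma trotter_comm_bound [Nontrivial H] {X : H →L[ℂ] H} (hX : IsSelfAdjoint X)
    (Y : H →L[ℂ] H) {s : ℝ} (hs : 0 ≤ s) :
    ‖exp ((s : ℂ) • ((-I) • X)) * Y - Y * exp ((s : ℂ) • ((-I) • X))‖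
      ≤ ‖((-I) • X) * Y - Y * ((-I) • X)‖ * s := by
  set B : H →L[ℂ] H := (-I) • X with hB
  have hnorm : ∀ r : ℝ, ‖exp ((r : ℂ) • B)‖ = 1 := fun r => trotter_norm_exp_one hX r
  have hnorm' : ∀ r : ℝ, ‖exp ((-(r : ℂ)) • B)‖ = 1 := by
    intro r
    have : (-(r : ℂ)) = (((-r : ℝ) : ℂ)) := by push_cast; ring
    rw [this]; exact hnorm (-r)
  have hMVT := norm_image_sub_le_of_norm_deriv_right_le_segment
    (f := fun r : ℝ => exp ((r : ℂ) • B) * (Y * exp ((-(r : ℂ)) • B)))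
    (f' := fun r : ℝ => exp ((r : ℂ) • B) * ((B * Y - Y * B) * exp ((-(r : ℂ)) • B)))
    (a := 0) (b := s) (C := ‖B * Y - Y * B‖)
    (fun r _ => (trotter_conj_deriv B Y r).continuousAt.continuousWithinAt)
    (fun r _ => (trotter_conj_deriv B Y r).hasDerivWithinAt)
    (fun r _ => by
      calc ‖exp ((r : ℂ) • B) * ((B * Y - Y * B) * exp ((-(r : ℂ)) • B))‖
          ≤ ‖exp ((r : ℂ) • B)‖ * (‖B * Y - Y * B‖ * ‖exp ((-(r : ℂ)) • B)‖) :=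
            (norm_mul_le _ _).trans (by gcongr; exact norm_mul_le _ _)
        _ = ‖B * Y - Y * B‖ := by rw [hnorm, hnorm']; ring)
    s ⟨hs, le_refl s⟩
  have hD0 : exp (((0 : ℝ) : ℂ) • B) * (Y * exp ((-((0 : ℝ) : ℂ)) • B)) = Y := by
    simp [NormedSpace.exp_zero]
  beta_reduce at hMVT
  rw [hD0] at hMVT
  have hfac : exp ((s : ℂ) • B) * Y - Y * exp ((s : ℂ) • B)
      = (exp ((s : ℂ) • B) * (Y * exp ((-(s : ℂ)) • B)) - Y) * exp ((s : ℂ) • B) := by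
    rw [sub_mul, mul_assoc, mul_assoc, trotter_inv B (s : ℂ), mul_one]
  rw [hfac]
  calc ‖(exp ((s : ℂ) • B) * (Y * exp ((-(s : ℂ)) • B)) - Y) * exp ((s : ℂ) • B)‖
      ≤ ‖exp ((s : ℂ) • B) * (Y * exp ((-(s : ℂ)) • B)) - Y‖ * ‖exp ((s : ℂ) • B)‖ :=
        norm_mul_le _ _
    _ = ‖exp ((s : ℂ) • B) * (Y * exp ((-(s : ℂ)) • B)) - Y‖ := by rw [hnorm s, mul_one]
    _ ≤ ‖B * Y - Y * B‖ * (s - 0) := hMVT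
    _ = ‖B * Y - Y * B‖ * s := by ring

private lemma trotter_G_deriv (T V : H →L[ℂ] H) (tc : ℂ) (s : ℝ) :
    HasDerivAt (fun r : ℝ => exp ((tc - (r : ℂ)) • ((-I) • (T + V))) *
        (exp ((r : ℂ) • ((-I) • T)) * exp ((r : ℂ) • ((-I) • V))))
      (exp ((tc - (s : ℂ)) • ((-I) • (T + V))) *
        ((exp ((s : ℂ) • ((-I) • T)) * ((-I) • V)
            - ((-I) • V) * exp ((s : ℂ) • ((-I) • T))) * exp ((s : ℂ) • ((-I) • V)))) s := by
  set BT : H →L[ℂ] H := (-I) • T with hBT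
  set BV : H →L[ℂ] H := (-I) • V with hBV
  have hBW : (-I) • (T + V) = BT + BV := by rw [hBT, hBV, smul_add]
  rw [hBW]
  have hleft : HasDerivAt (fun z : ℂ => exp ((tc - z) • (BT + BV)))
      (-(exp ((tc - (s : ℂ)) • (BT + BV)) * (BT + BV))) (s : ℂ) := by
    simpa [Function.comp_def] using HasDerivAt.scomp (s : ℂ)
      (hasDerivAt_exp_smul_const (𝕂 := ℂ) (BT + BV) (tc - (s : ℂ)))
      ((hasDerivAt_id (s : ℂ)).const_sub tc)
  have hright := (hasDerivAt_exp_smul_const (𝕂 := ℂ) BT (s : ℂ)).mul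
    (hasDerivAt_exp_smul_const (𝕂 := ℂ) BV (s : ℂ))
  have h3 : HasDerivAt (fun z : ℂ => exp ((tc - z) • (BT + BV)) *
      (exp (z • BT) * exp (z • BV)))
      (exp ((tc - (s : ℂ)) • (BT + BV)) *
        ((exp ((s : ℂ) • BT) * BV - BV * exp ((s : ℂ) • BT)) * exp ((s : ℂ) • BV)))
      (s : ℂ) := by
    refine (hleft.mul hright).congr_deriv ?_
    simp only [Pi.mul_apply]
    rw [← trotter_commute BT (s : ℂ), ← trotter_commute BV (s : ℂ)]
    noncomm_ring
  exact trotter_comp_ofReal h3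

private lemma trotter_key [Nontrivial H] (T V : H →L[ℂ] H)
    (hT : IsSelfAdjoint T) (hV : IsSelfAdjoint V) {t : ℝ} (ht : 0 ≤ t) :
    ‖exp ((t : ℂ) • ((-I) • (T + V)))
        - exp ((t : ℂ) • ((-I) • T)) * exp ((t : ℂ) • ((-I) • V))‖
      ≤ ‖T * V - V * T‖ * (t ^ 2 / 2) := by
  set C := ‖T * V - V * T‖ with hC
  have hCnn : 0 ≤ C := norm_nonneg _
  -- norm of commutator of generators
  have hCC : ‖((-I) • T) * ((-I) • V) - ((-I) • V) * ((-I) • T)‖ = C := by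
    have h1 : ((-I) • T) * ((-I) • V) - ((-I) • V) * ((-I) • T)
        = ((-I) * (-I)) • (T * V - V * T) := by
      rw [smul_sub]
      rw [smul_mul_assoc, smul_mul_assoc, mul_smul_comm, mul_smul_comm, smul_smul, smul_smul]
    rw [h1, norm_smul]
    have : ((-I) * (-I) : ℂ) = -1 := by
      simp [Complex.I_mul_I]
    rw [this]
    simp [hC]
  have hnW : ∀ r : ℝ, ‖exp ((r : ℂ) • ((-I) • (T + V)))‖ = 1 :=
    fun r => trotter_norm_exp_one (hT.add hV) r
  have hnV : ∀ r : ℝ, ‖exp ((r : ℂ) • ((-I) • V))‖ = 1 :=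
    fun r => trotter_norm_exp_one hV r
  -- the interpolating function
  set G : ℝ → (H →L[ℂ] H) := fun r => exp (((t : ℂ) - (r : ℂ)) • ((-I) • (T + V))) *
      (exp ((r : ℂ) • ((-I) • T)) * exp ((r : ℂ) • ((-I) • V))) with hG
  set G' : ℝ → (H →L[ℂ] H) := fun r => exp (((t : ℂ) - (r : ℂ)) • ((-I) • (T + V))) *
      ((exp ((r : ℂ) • ((-I) • T)) * ((-I) • V)
          - ((-I) • V) * exp ((r : ℂ) • ((-I) • T))) * exp ((r : ℂ) • ((-I) • V))) with hG'
  have hGd : ∀ r : ℝ, HasDerivAt G (G' r) r := fun r => trotter_G_deriv T V (t : ℂ) r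
  have bound : ∀ r ∈ Set.Ico (0 : ℝ) t, ‖G' r‖ ≤ C * r := by
    intro r hr
    have hcast : ((t : ℂ) - (r : ℂ)) = (((t - r : ℝ)) : ℂ) := by push_cast; ring
    have h1 : ‖exp (((t : ℂ) - (r : ℂ)) • ((-I) • (T + V)))‖ = 1 := by
      rw [hcast]; exact hnW (t - r)
    have h2 := trotter_comm_bound hT ((-I) • V) hr.1
    rw [hCC] at h2
    calc ‖G' r‖ ≤ ‖exp (((t : ℂ) - (r : ℂ)) • ((-I) • (T + V)))‖ *
          (‖exp ((r : ℂ) • ((-I) • T)) * ((-I) • V)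
              - ((-I) • V) * exp ((r : ℂ) • ((-I) • T))‖ * ‖exp ((r : ℂ) • ((-I) • V))‖) :=
          (norm_mul_le _ _).trans (by gcongr; exact norm_mul_le _ _)
      _ = ‖exp ((r : ℂ) • ((-I) • T)) * ((-I) • V)
              - ((-I) • V) * exp ((r : ℂ) • ((-I) • T))‖ := by rw [h1, hnV r]; ring
      _ ≤ C * r := h2
  have hB : ∀ x : ℝ, HasDerivAt (fun x : ℝ => C * (x ^ 2 / 2)) (C * x) x := by
    intro x
    have := ((hasDerivAt_pow 2 x).div_const 2).const_mul C
    refine this.congr_deriv ?_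
    norm_num
  have main := image_norm_le_of_norm_deriv_right_le_deriv_boundary
    (f := fun r => G r - G 0) (f' := G') (a := 0) (b := t)
    (B := fun x => C * (x ^ 2 / 2)) (B' := fun x => C * x)
    (fun r _ => ((hGd r).sub_const (G 0)).continuousAt.continuousWithinAt)
    (fun r _ => ((hGd r).sub_const (G 0)).hasDerivWithinAt)
    (by simp) hB bound ⟨ht, le_refl t⟩
  have hGt : G t = exp ((t : ℂ) • ((-I) • T)) * exp ((t : ℂ) • ((-I) • V)) := by
    rw [hG]; simp [NormedSpace.exp_zero]
  have hG0 : G 0 = exp ((t : ℂ) • ((-I) • (T + V))) := by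
    rw [hG]; simp [NormedSpace.exp_zero]
  beta_reduce at main
  rw [hGt, hG0, norm_sub_rev] at main
  linarith [main]

end TrotterAux

/-- first-order Trotter error bound
`‖e^{−it(T+V)} − e^{−itT} e^{−itV}‖ ≤ (t²/2) ‖[T,V]‖`. -/
theorem first_order_trotter_bound
    {H : Type*} [NormedAddCommGroup H] [InnerProductSpace ℂ H] [CompleteSpace H]
    (T V : H →L[ℂ] H) (hT : IsSelfAdjoint T) (hV : IsSelfAdjoint V) (t : ℝ) :
    ‖NormedSpace.exp ((-Complex.I * (t : ℂ)) • (T + V))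
        - NormedSpace.exp ((-Complex.I * (t : ℂ)) • T)
          * NormedSpace.exp ((-Complex.I * (t : ℂ)) • V)‖
      ≤ t ^ 2 / 2 * ‖T * V - V * T‖ := by
  rcases subsingleton_or_nontrivial H with hs | hnt
  · haveI : Subsingleton (H →L[ℂ] H) :=
      ⟨fun f g => ContinuousLinearMap.ext fun x => Subsingleton.elim _ _⟩
    have h0 : (NormedSpace.exp ((-Complex.I * (t : ℂ)) • (T + V))
        - NormedSpace.exp ((-Complex.I * (t : ℂ)) • T)
          * NormedSpace.exp ((-Complex.I * (t : ℂ)) • V)) = 0 := Subsingleton.elim _ _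
    rw [h0, norm_zero]
    positivity
  · rcases le_or_gt 0 t with ht | ht
    · have e1 : ∀ X : H →L[ℂ] H, (-I * (t : ℂ)) • X = (t : ℂ) • ((-I) • X) := by
        intro X; rw [smul_smul]; congr 1; ring
      rw [e1, e1, e1]
      have h := trotter_key T V hT hV ht
      linarith [h, mul_comm (‖T * V - V * T‖) (t ^ 2 / 2)]
    · have ht' : (0 : ℝ) ≤ -t := by linarith
      have h := trotter_key (-T) (-V) hT.neg hV.neg ht'
      have e2 : ∀ X : H →L[ℂ] H, ((-t : ℝ) : ℂ) • ((-I) • (-X)) = (-I * (t : ℂ)) • X := by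
        intro X
        rw [smul_neg, smul_neg, ← neg_smul, smul_smul]
        congr 1; push_cast; ring
      have hadd : (-T) + (-V) = -(T + V) := (neg_add T V).symm
      rw [hadd, e2, e2, e2] at h
      have hcomm : (-T) * (-V) - (-V) * (-T) = T * V - V * T := by
        rw [neg_mul_neg, neg_mul_neg]
      rw [hcomm] at h
      have hpow : (-t) ^ 2 = t ^ 2 := by ring
      rw [hpow] at h
      linarith [h, mul_comm (‖T * V - V * T‖) (t ^ 2 / 2)]
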